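/- Let r ∈ ℝ, μ > r, σ > 0, τ > 0, S > 0, α ∈ (0,1), λ₁ > 0, λ₂ ∈ (0, μ − r), and set ν := r − σ²/2, ν̃ := μ − σ²/2, d(k, S') := (k − ln S' − ν·τ)/(σ·√τ) and d̃(k, S') := (k − ln S' − ν̃·τ)/(σ·√τ). Let U : ℝ → ℝ be nondecreasing with U(0) = 0, and let u < sup_{x∈ℝ} U(x). Then there exist k ∈ ℝ, h > 0 and ℓ < 0 such that: (a) e^{−rτ}( ℓ·Φ(d(k, S·e^{λ₁τ})) + h(1 − Φ(d(k, S·e^{λ₁τ}))) ) ≥ 1 (the price at the up-shifted spot is at least 1); (b) e^{−rτ}( ℓ·Φ(d(k, S)) + h(1 − Φ(d(k, S))) ) = −1 (the price at spot S equals −1); (c) −(1/α)( ℓ·Φ(d̃(k, S·e^{−λ₂τ})) + h(α − Φ(d̃(k, S·e^{−λ₂τ}))) ) ≤ −1 (the Expected Shortfall at the down-shifted spot is at most −1); (d) U(h)·(1 − Φ(d̃(k, S))) ≥ u (the expected utility at spot S is at least u). -/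

import Mathlib

open MeasureTheory ProbabilityTheory Real Filter Set
open scoped Topology

/-- Cumulative distribution function of the standard normal distribution. -/
noncomputable def stdNormalCDF : ℝ → ℝ :=
  fun x => ProbabilityTheory.cdf (ProbabilityTheory.gaussianReal 0 1) x

lemma stdNormalCDF_eq (x : ℝ) :
    stdNormalCDF x = ∫ t in Iic x, gaussianPDFReal 0 1 t := by
  rw [stdNormalCDF, cdf_eq_real, measureReal_def, gaussianReal_apply_eq_integral 0 one_ne_zero,
    ENNReal.toReal_ofReal (integral_nonneg fun t => gaussianPDFReal_nonneg 0 1 t)]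

lemma stdNormalCDF_pos (x : ℝ) : 0 < stdNormalCDF x := by
  rw [stdNormalCDF, cdf_eq_real, measureReal_def]
  refine ENNReal.toReal_pos ?_ (measure_ne_top _ _)
  intro h
  have h2 := (gaussianReal_absolutelyContinuous' 0 one_ne_zero) h
  simp [Real.volume_Iic] at h2

lemma stdNormalCDF_le_one (x : ℝ) : stdNormalCDF x ≤ 1 := cdf_le_one _ _

lemma stdNormalCDF_nonneg (x : ℝ) : 0 ≤ stdNormalCDF x := cdf_nonneg _ _

lemma stdNormalCDF_tendsto_atBot : Filter.Tendsto stdNormalCDF atBot (𝓝 0) :=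
  tendsto_cdf_atBot (gaussianReal 0 1)

lemma gaussian_shift_integral (x c : ℝ) :
    ∫ t in Iic (x - c), gaussianPDFReal 0 1 (t + c) = ∫ t in Iic x, gaussianPDFReal 0 1 t := by
  have := (measurePreserving_add_right (volume : Measure ℝ) c).setIntegral_preimage_emb
    (measurableEmbedding_addRight c) (gaussianPDFReal 0 1) (Iic x)
  have hpre : (fun t => t + c) ⁻¹' (Iic x) = Iic (x - c) := by
    ext t; simp [le_sub_iff_add_le]
  rwa [hpre] at this

lemma stdNormalCDF_shift_le (x c : ℝ) (hc : 0 ≤ c) :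
    stdNormalCDF (x - c) ≤ Real.exp (c*x - c^2/2) * stdNormalCDF x := by
  rw [stdNormalCDF_eq, stdNormalCDF_eq, ← gaussian_shift_integral x c, ← integral_const_mul]
  refine setIntegral_mono_on (integrable_gaussianPDFReal 0 1).integrableOn
    ((((integrable_gaussianPDFReal 0 1).comp_add_right c).const_mul _).integrableOn)
    measurableSet_Iic ?_
  intro t ht
  simp only [mem_Iic] at ht
  simp only [gaussianPDFReal, NNReal.coe_one, mul_one, sub_zero]
  rw [mul_left_comm]
  refine mul_le_mul_of_nonneg_left ?_ (by positivity)
  rw [← Real.exp_add, Real.exp_le_exp]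
  nlinarith [mul_nonneg hc (sub_nonneg.mpr ht)]

lemma stdNormalCDF_ratio_tendsto {c : ℝ} (hc : 0 < c) {g : ℝ → ℝ}
    (hg : Filter.Tendsto g atBot atBot) :
    Filter.Tendsto (fun k => stdNormalCDF (g k - c) / stdNormalCDF (g k)) atBot (𝓝 0) := by
  have hexp : Filter.Tendsto (fun k => Real.exp (c * g k - c^2/2)) atBot (𝓝 0) := by
    apply Real.tendsto_exp_atBot.comp
    apply Filter.tendsto_atBot_add_const_right
    exact hg.const_mul_atBot hc
  refine squeeze_zero (fun k => div_nonneg (stdNormalCDF_nonneg _) (stdNormalCDF_pos _).le)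
    (fun k => ?_) hexp
  rw [div_le_iff₀ (stdNormalCDF_pos _)]
  exact stdNormalCDF_shift_le _ c hc.le

/-- A limited-liability derivatives trader can find a digital option meeting the
budget constraint (price `-1` at spot `S`), remaining valuable at the up-shifted
spot, satisfying the Expected Shortfall constraint at the down-shifted spot, and
achieving expected utility at least `u` for any `u < sup U`. -/
theorem digital_option_meets_budget_ES_and_utility
    (r μ σ τ S α lam₁ lam₂ : ℝ) (hμ : r < μ) (hσ : 0 < σ) (hτ : 0 < τ)
    (hS : 0 < S) (hα₁ : 0 < α) (hα₂ : α < 1)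
    (hlam₁ : 0 < lam₁) (hlam₂ : 0 < lam₂) (hlam₂' : lam₂ < μ - r)
    (ν ν' : ℝ) (hν : ν = r - σ^2/2) (hν' : ν' = μ - σ^2/2)
    (d d' : ℝ → ℝ → ℝ)
    (hd : ∀ k S', d k S' = (k - Real.log S' - ν*τ) / (σ * Real.sqrt τ))
    (hd' : ∀ k S', d' k S' = (k - Real.log S' - ν'*τ) / (σ * Real.sqrt τ))
    (U : ℝ → ℝ) (hU : Monotone U) (hU0 : U 0 = 0)
    (u : ℝ) (hu : ∃ x : ℝ, u < U x) :
    ∃ k h l : ℝ, 0 < h ∧ l < 0 ∧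
      Real.exp (-(r*τ)) * (l * stdNormalCDF (d k (S * Real.exp (lam₁*τ)))
          + h * (1 - stdNormalCDF (d k (S * Real.exp (lam₁*τ))))) ≥ 1 ∧
      Real.exp (-(r*τ)) * (l * stdNormalCDF (d k S)
          + h * (1 - stdNormalCDF (d k S))) = -1 ∧
      -(1/α) * (l * stdNormalCDF (d' k (S * Real.exp (-(lam₂*τ))))
          + h * (α - stdNormalCDF (d' k (S * Real.exp (-(lam₂*τ)))))) ≤ -1 ∧
      U h * (1 - stdNormalCDF (d' k S)) ≥ u := by
  obtain ⟨x₀, hx₀⟩ := hu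
  set h : ℝ := max x₀ (Real.exp (r*τ) + 1) with hh_def
  have hh1 : Real.exp (r*τ) + 1 ≤ h := le_max_right _ _
  have hh : 0 < h := lt_of_lt_of_le (by positivity) hh1
  have hUh : u < U h := lt_of_lt_of_le hx₀ (hU (le_max_left _ _))
  have hsq : 0 < σ * Real.sqrt τ := by positivity
  set c₁ : ℝ := lam₁ * τ / (σ * Real.sqrt τ) with hc₁def
  set c₂ : ℝ := (μ - r - lam₂) * τ / (σ * Real.sqrt τ) with hc₂def
  set c₃ : ℝ := (μ - r) * τ / (σ * Real.sqrt τ) with hc₃def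
  have hc₁ : 0 < c₁ := div_pos (mul_pos hlam₁ hτ) hsq
  have hc₂ : 0 < c₂ := div_pos (mul_pos (by linarith) hτ) hsq
  have hc₃ : 0 < c₃ := div_pos (mul_pos (by linarith) hτ) hsq
  set g : ℝ → ℝ := fun k => d k S with hgdef
  have hg1 : ∀ k, d k (S * Real.exp (lam₁*τ)) = g k - c₁ := by
    intro k
    simp only [hgdef, hd, hc₁def]
    rw [Real.log_mul hS.ne' (Real.exp_ne_zero _), Real.log_exp]
    ring
  have hg2 : ∀ k, d' k (S * Real.exp (-(lam₂*τ))) = g k - c₂ := by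
    intro k
    simp only [hgdef, hd, hd', hν, hν', hc₂def]
    rw [Real.log_mul hS.ne' (Real.exp_ne_zero _), Real.log_exp]
    ring
  have hg3 : ∀ k, d' k S = g k - c₃ := by
    intro k
    simp only [hgdef, hd, hd', hν, hν', hc₃def]
    ring
  have hgtend : Filter.Tendsto g atBot atBot := by
    refine tendsto_atBot_atBot.mpr (fun b => ⟨b * (σ * Real.sqrt τ) + (Real.log S + ν*τ),
      fun a ha => ?_⟩)
    simp only [hgdef, hd]
    rw [div_le_iff₀ hsq]
    linarith
  -- the short position
  set l : ℝ → ℝ := fun k =>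
    (-(Real.exp (r*τ)) - h * (1 - stdNormalCDF (g k))) / stdNormalCDF (g k) with hldef
  have hp : ∀ k, 0 < stdNormalCDF (g k) := fun k => stdNormalCDF_pos _
  have hlneg : ∀ k, l k < 0 := by
    intro k
    refine div_neg_of_neg_of_pos ?_ (hp k)
    nlinarith [Real.exp_pos (r*τ), mul_nonneg hh.le (sub_nonneg.mpr (stdNormalCDF_le_one (g k)))]
  have hlmul : ∀ k c, l k * stdNormalCDF (g k - c) =
      (stdNormalCDF (g k - c) / stdNormalCDF (g k)) *
        (-(Real.exp (r*τ)) - h * (1 - stdNormalCDF (g k))) := by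
    intro k c
    rw [hldef]
    field_simp
  have hb : ∀ k, Real.exp (-(r*τ)) * (l k * stdNormalCDF (g k)
      + h * (1 - stdNormalCDF (g k))) = -1 := by
    intro k
    rw [hldef, div_mul_cancel₀ _ (hp k).ne']
    have : -(Real.exp (r*τ)) - h * (1 - stdNormalCDF (g k)) + h * (1 - stdNormalCDF (g k))
        = -(Real.exp (r*τ)) := by ring
    rw [this, mul_neg, ← Real.exp_add]
    simp
  -- limits
  have hP0 : Filter.Tendsto (fun k => stdNormalCDF (g k)) atBot (𝓝 0) :=
    stdNormalCDF_tendsto_atBot.comp hgtend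
  have hQ : ∀ c : ℝ, Filter.Tendsto (fun k => stdNormalCDF (g k - c)) atBot (𝓝 0) := by
    intro c
    refine stdNormalCDF_tendsto_atBot.comp ?_
    simpa [sub_eq_add_neg] using Filter.tendsto_atBot_add_const_right atBot (-c) hgtend
  have hR₁ := stdNormalCDF_ratio_tendsto hc₁ hgtend
  have hR₂ := stdNormalCDF_ratio_tendsto hc₂ hgtend
  have hnum : Filter.Tendsto (fun k => -(Real.exp (r*τ)) - h * (1 - stdNormalCDF (g k)))
      atBot (𝓝 (-(Real.exp (r*τ)) - h * (1 - 0))) :=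
    tendsto_const_nhds.sub (tendsto_const_nhds.mul (tendsto_const_nhds.sub hP0))
  -- condition (a)
  have hA : Filter.Tendsto (fun k => Real.exp (-(r*τ)) *
      ((stdNormalCDF (g k - c₁) / stdNormalCDF (g k)) *
        (-(Real.exp (r*τ)) - h * (1 - stdNormalCDF (g k)))
        + h * (1 - stdNormalCDF (g k - c₁)))) atBot
      (𝓝 (Real.exp (-(r*τ)) * (0 * (-(Real.exp (r*τ)) - h * (1 - 0)) + h * (1 - 0)))) :=
    tendsto_const_nhds.mul ((hR₁.mul hnum).add
      (tendsto_const_nhds.mul (tendsto_const_nhds.sub (hQ c₁))))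
  have hAlim : (1 : ℝ) < Real.exp (-(r*τ)) * (0 * (-(Real.exp (r*τ)) - h * (1 - 0)) + h * (1 - 0)) := by
    have e1 : Real.exp (-(r*τ)) * Real.exp (r*τ) = 1 := by
      rw [← Real.exp_add]; simp
    nlinarith [Real.exp_pos (-(r*τ))]
  have Ea := hA.eventually (eventually_ge_nhds hAlim)
  -- condition (c)
  have hC : Filter.Tendsto (fun k => -(1/α) *
      ((stdNormalCDF (g k - c₂) / stdNormalCDF (g k)) *
        (-(Real.exp (r*τ)) - h * (1 - stdNormalCDF (g k)))
        + h * (α - stdNormalCDF (g k - c₂)))) atBot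
      (𝓝 (-(1/α) * (0 * (-(Real.exp (r*τ)) - h * (1 - 0)) + h * (α - 0)))) :=
    tendsto_const_nhds.mul ((hR₂.mul hnum).add
      (tendsto_const_nhds.mul (tendsto_const_nhds.sub (hQ c₂))))
  have hClim : -(1/α) * (0 * (-(Real.exp (r*τ)) - h * (1 - 0)) + h * (α - 0)) < -1 := by
    have : -(1/α) * (0 * (-(Real.exp (r*τ)) - h * (1 - 0)) + h * (α - 0)) = -h := by
      field_simp
      ring
    rw [this]
    nlinarith [Real.exp_pos (r*τ)]
  have Ec := hC.eventually (eventually_le_nhds hClim)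
  -- condition (d)
  have hD : Filter.Tendsto (fun k => U h * (1 - stdNormalCDF (g k - c₃))) atBot
      (𝓝 (U h * (1 - 0))) :=
    tendsto_const_nhds.mul (tendsto_const_nhds.sub (hQ c₃))
  have hDlim : u < U h * (1 - 0) := by simpa using hUh
  have Ed := hD.eventually (eventually_ge_nhds hDlim)
  obtain ⟨k, hka, hkc, hkd⟩ := (Ea.and (Ec.and Ed)).exists
  refine ⟨k, h, l k, hh, hlneg k, ?_, ?_, ?_, ?_⟩
  · rw [hg1 k, hlmul k c₁]
    exact hka
  · exact hb k
  · rw [hg2 k, hlmul k c₂]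
    exact hkc
  · rw [hg3 k]
    exact hkd
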